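/- Let a, q ∈ ℂⁿ be nonzero vectors, let M_P = (p_{jα}) ∈ ℂ^{n×n} be a nonzero matrix, and define P, Q : U(n) → ℂ by P(z) = Σ_{j,α} p_{jα}·z_{jα} and Q(z) = Σ_{k,β} q_k·a_β·z_{kβ}. Suppose that either (i) for every α the column vector (p_{1α},…,p_{nα}) is linearly dependent with q, or (ii) there exists β₀ such that a_β = 0 for all β ≠ β₀ and p_{jα} = 0 for all α ≠ β₀ and all j. Then P(z)·Q(z) + Σ_{Z∈B} P(z·Z)·Q(z·Z) = 0 for every z ∈ U(n), i.e. PQ + κ(P,Q) = 0 on U(n) (so the quotient f = P/Q is harmonic on the open dense set where Q ≠ 0). -/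

import Mathlib

/-- The matrix `E_rs` with `(r,s)`-entry `1` and all other entries `0`. -/
noncomputable def EE (n : ℕ) (r s : Fin n) : Matrix (Fin n) (Fin n) ℂ :=
  Matrix.single r s 1

/-- `X_rs = (E_rs + E_sr)/√2`. -/
noncomputable def XX (n : ℕ) (r s : Fin n) : Matrix (Fin n) (Fin n) ℂ :=
  (Real.sqrt 2 : ℂ)⁻¹ • (EE n r s + EE n s r)

/-- `Y_rs = (E_rs - E_sr)/√2`. -/
noncomputable def YY (n : ℕ) (r s : Fin n) : Matrix (Fin n) (Fin n) ℂ :=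
  (Real.sqrt 2 : ℂ)⁻¹ • (EE n r s - EE n s r)

/-- `D_r = E_rr`. -/
noncomputable def DD (n : ℕ) (r : Fin n) : Matrix (Fin n) (Fin n) ℂ :=
  Matrix.single r r 1

/-- The Laplace–Beltrami operator `τ(F)(z) = Σ_{Z ∈ B} F(z·Z·Z)` of the bi-invariant
metric on `U(n)`, where `B = {iX_rs, Y_rs (r<s), iD_r}` is the canonical orthonormal
basis of `u(n)`. -/
noncomputable def tauU (n : ℕ) (F : Matrix (Fin n) (Fin n) ℂ → ℂ)
    (z : Matrix (Fin n) (Fin n) ℂ) : ℂ :=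
  (∑ r : Fin n, ∑ s : Fin n, if r < s then
      F (z * (Complex.I • XX n r s) * (Complex.I • XX n r s))
        + F (z * YY n r s * YY n r s)
    else 0)
  + ∑ r : Fin n, F (z * (Complex.I • DD n r) * (Complex.I • DD n r))

/-- The conformality operator `κ(F,G)(z) = Σ_{Z ∈ B} F(z·Z)·G(z·Z)` on `U(n)`. -/
noncomputable def kappaU (n : ℕ) (F G : Matrix (Fin n) (Fin n) ℂ → ℂ)
    (z : Matrix (Fin n) (Fin n) ℂ) : ℂ :=
  (∑ r : Fin n, ∑ s : Fin n, if r < s then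
      F (z * (Complex.I • XX n r s)) * G (z * (Complex.I • XX n r s))
        + F (z * YY n r s) * G (z * YY n r s)
    else 0)
  + ∑ r : Fin n, F (z * (Complex.I • DD n r)) * G (z * (Complex.I • DD n r))

section helpers

variable {n : ℕ}

lemma lin_mul (C : Fin n → Fin n → ℂ) (z M : Matrix (Fin n) (Fin n) ℂ) :
    ∑ j, ∑ α, C j α * (z * M) j α = ∑ r, ∑ s, M r s * (∑ j, C j s * z j r) := by
  simp only [Matrix.mul_apply, Finset.mul_sum]
  calc ∑ j : Fin n, ∑ α : Fin n, ∑ t : Fin n, C j α * (z j t * M t α)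
      = ∑ j : Fin n, ∑ t : Fin n, ∑ α : Fin n, C j α * (z j t * M t α) :=
        Finset.sum_congr rfl fun j _ => Finset.sum_comm
    _ = ∑ t : Fin n, ∑ j : Fin n, ∑ α : Fin n, C j α * (z j t * M t α) := Finset.sum_comm
    _ = ∑ t : Fin n, ∑ α : Fin n, ∑ j : Fin n, C j α * (z j t * M t α) :=
        Finset.sum_congr rfl fun t _ => Finset.sum_comm
    _ = ∑ r : Fin n, ∑ s : Fin n, ∑ j : Fin n, M r s * (C j s * z j r) := by
        exact Finset.sum_congr rfl fun r _ => Finset.sum_congr rfl fun s _ =>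
          Finset.sum_congr rfl fun j _ => by ring

lemma sum_EE (u : Fin n → Fin n → ℂ) (r s : Fin n) :
    ∑ t : Fin n, ∑ w : Fin n, (EE n r s) t w * u t w = u r s := by
  simp [EE, Matrix.single, ite_and, Finset.sum_ite_eq, Finset.sum_ite_eq']

lemma evalX (C : Fin n → Fin n → ℂ) (z : Matrix (Fin n) (Fin n) ℂ) (r s : Fin n) :
    ∑ j, ∑ α, C j α * (z * (Complex.I • XX n r s)) j α
      = Complex.I * (Real.sqrt 2 : ℂ)⁻¹ * (∑ j, C j s * z j r)
        + Complex.I * (Real.sqrt 2 : ℂ)⁻¹ * (∑ j, C j r * z j s) := by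
  rw [lin_mul]
  calc ∑ t : Fin n, ∑ w : Fin n, (Complex.I • XX n r s) t w * (∑ j, C j w * z j t)
      = ∑ t : Fin n, ∑ w : Fin n,
          (Complex.I * (Real.sqrt 2 : ℂ)⁻¹ * ((EE n r s) t w * (∑ j, C j w * z j t))
            + Complex.I * (Real.sqrt 2 : ℂ)⁻¹ * ((EE n s r) t w * (∑ j, C j w * z j t))) := by
        refine Finset.sum_congr rfl fun t _ => Finset.sum_congr rfl fun w _ => ?_
        simp only [XX, Matrix.smul_apply, Matrix.add_apply, smul_eq_mul]
        ring
    _ = _ := by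
        simp only [Finset.sum_add_distrib, ← Finset.mul_sum, sum_EE]

lemma evalY (C : Fin n → Fin n → ℂ) (z : Matrix (Fin n) (Fin n) ℂ) (r s : Fin n) :
    ∑ j, ∑ α, C j α * (z * YY n r s) j α
      = (Real.sqrt 2 : ℂ)⁻¹ * (∑ j, C j s * z j r)
        - (Real.sqrt 2 : ℂ)⁻¹ * (∑ j, C j r * z j s) := by
  rw [lin_mul]
  calc ∑ t : Fin n, ∑ w : Fin n, (YY n r s) t w * (∑ j, C j w * z j t)
      = ∑ t : Fin n, ∑ w : Fin n,
          ((Real.sqrt 2 : ℂ)⁻¹ * ((EE n r s) t w * (∑ j, C j w * z j t))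
            - (Real.sqrt 2 : ℂ)⁻¹ * ((EE n s r) t w * (∑ j, C j w * z j t))) := by
        refine Finset.sum_congr rfl fun t _ => Finset.sum_congr rfl fun w _ => ?_
        simp only [YY, Matrix.smul_apply, Matrix.sub_apply, smul_eq_mul]
        ring
    _ = _ := by
        simp only [Finset.sum_sub_distrib, ← Finset.mul_sum, sum_EE]

lemma evalD (C : Fin n → Fin n → ℂ) (z : Matrix (Fin n) (Fin n) ℂ) (r : Fin n) :
    ∑ j, ∑ α, C j α * (z * (Complex.I • DD n r)) j α
      = Complex.I * (∑ j, C j r * z j r) := by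
  rw [lin_mul]
  have hDD : DD n r = EE n r r := rfl
  calc ∑ t : Fin n, ∑ w : Fin n, (Complex.I • DD n r) t w * (∑ j, C j w * z j t)
      = ∑ t : Fin n, ∑ w : Fin n,
          Complex.I * ((EE n r r) t w * (∑ j, C j w * z j t)) := by
        refine Finset.sum_congr rfl fun t _ => Finset.sum_congr rfl fun w _ => ?_
        simp only [hDD, Matrix.smul_apply, smul_eq_mul]
        ring
    _ = _ := by
        simp only [← Finset.mul_sum, sum_EE]

lemma sum_split (f : Fin n → Fin n → ℂ) :
    (∑ r, ∑ s, if r < s then f r s + f s r else 0) + ∑ r, f r r = ∑ r, ∑ s, f r s := by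
  have key : ∀ r s : Fin n, f r s =
      (if r < s then f r s else 0) + (if s < r then f r s else 0)
        + (if r = s then f r s else 0) := by
    intro r s
    rcases lt_trichotomy r s with h | h | h
    · simp [h, asymm h, h.ne]
    · simp [h, lt_irrefl]
    · simp [h, asymm h, h.ne']
  have hk : ∑ r : Fin n, ∑ s : Fin n, f r s
      = ∑ r : Fin n, ∑ s : Fin n, ((if r < s then f r s else 0) + (if s < r then f r s else 0)
          + (if r = s then f r s else 0)) :=
    Finset.sum_congr rfl fun r _ => Finset.sum_congr rfl fun s _ => key r s
  rw [hk]
  simp only [Finset.sum_add_distrib]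
  have h1 : ∑ r : Fin n, ∑ s : Fin n, (if s < r then f r s else 0)
      = ∑ r : Fin n, ∑ s : Fin n, (if r < s then f s r else 0) := Finset.sum_comm
  have h2 : ∑ r : Fin n, ∑ s : Fin n, (if r = s then f r s else 0) = ∑ r : Fin n, f r r := by
    simp [Finset.sum_ite_eq, Finset.sum_ite_eq']
  rw [h1, h2]
  have h3 : ∑ r : Fin n, ∑ s : Fin n, (if r < s then f r s + f s r else 0)
      = (∑ r : Fin n, ∑ s : Fin n, (if r < s then f r s else 0))
        + ∑ r : Fin n, ∑ s : Fin n, (if r < s then f s r else 0) := by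
    rw [← Finset.sum_add_distrib]
    refine Finset.sum_congr rfl fun r _ => ?_
    rw [← Finset.sum_add_distrib]
    refine Finset.sum_congr rfl fun s _ => ?_
    split <;> simp
  rw [h3]

lemma kappa_shape (u v : Fin n → Fin n → ℂ) :
    (∑ r : Fin n, ∑ s : Fin n, if r < s then
        (Complex.I * (Real.sqrt 2 : ℂ)⁻¹ * u r s + Complex.I * (Real.sqrt 2 : ℂ)⁻¹ * u s r)
          * (Complex.I * (Real.sqrt 2 : ℂ)⁻¹ * v r s + Complex.I * (Real.sqrt 2 : ℂ)⁻¹ * v s r)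
        + ((Real.sqrt 2 : ℂ)⁻¹ * u r s - (Real.sqrt 2 : ℂ)⁻¹ * u s r)
          * ((Real.sqrt 2 : ℂ)⁻¹ * v r s - (Real.sqrt 2 : ℂ)⁻¹ * v s r)
      else 0)
    + ∑ r : Fin n, (Complex.I * u r r) * (Complex.I * v r r)
    = -∑ r : Fin n, ∑ s : Fin n, u r s * v s r := by
  have h2 : (Real.sqrt 2 : ℂ)⁻¹ * (Real.sqrt 2 : ℂ)⁻¹ = (2 : ℂ)⁻¹ := by
    have h : ((Real.sqrt 2 : ℝ) : ℂ) * ((Real.sqrt 2 : ℝ) : ℂ) = (2 : ℂ) := by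
      norm_cast
      exact Real.mul_self_sqrt (by norm_num)
    rw [← mul_inv, h]
  have hbr : ∀ r s : Fin n,
      (Complex.I * (Real.sqrt 2 : ℂ)⁻¹ * u r s + Complex.I * (Real.sqrt 2 : ℂ)⁻¹ * u s r)
          * (Complex.I * (Real.sqrt 2 : ℂ)⁻¹ * v r s + Complex.I * (Real.sqrt 2 : ℂ)⁻¹ * v s r)
        + ((Real.sqrt 2 : ℂ)⁻¹ * u r s - (Real.sqrt 2 : ℂ)⁻¹ * u s r)
          * ((Real.sqrt 2 : ℂ)⁻¹ * v r s - (Real.sqrt 2 : ℂ)⁻¹ * v s r)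
      = -(u r s * v s r) + -(u s r * v r s) := by
    intro r s
    have hI := Complex.I_mul_I
    linear_combination ((Real.sqrt 2 : ℂ)⁻¹ * (Real.sqrt 2 : ℂ)⁻¹
        * (u r s + u s r) * (v r s + v s r)) * hI
      + ((u r s - u s r) * (v r s - v s r) - (u r s + u s r) * (v r s + v s r)) * h2
  have hd : ∀ r : Fin n, (Complex.I * u r r) * (Complex.I * v r r) = -(u r r * v r r) := by
    intro r
    linear_combination (u r r * v r r) * Complex.I_mul_I
  simp only [hbr, hd]
  rw [sum_split (fun r s => -(u r s * v s r))]
  simp [Finset.sum_neg_distrib]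

lemma kappa_eval (CP CQ : Fin n → Fin n → ℂ) (z : Matrix (Fin n) (Fin n) ℂ) :
    kappaU n (fun w => ∑ j, ∑ α, CP j α * w j α) (fun w => ∑ k, ∑ β, CQ k β * w k β) z
      = -∑ r : Fin n, ∑ s : Fin n, (∑ j, CP j s * z j r) * (∑ k, CQ k r * z k s) := by
  simp only [kappaU, evalX, evalY, evalD]
  exact kappa_shape (fun r s => ∑ j, CP j s * z j r) (fun r s => ∑ k, CQ k s * z k r)

end helpers

/-- Theorem 4.4 (1), sufficiency: if (i) the vector `q` and each column of `M_P` are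
linearly dependent, or (ii) the vector `a` and the matrix `M_P` are concentrated in a
single column `β₀`, then `PQ + κ(P,Q) = 0` on `U(n)`, i.e. `f = P/Q` is harmonic. -/
theorem stmt_2 (n : ℕ) (hn : 0 < n) (a q : Fin n → ℂ) (ha : a ≠ 0) (hq : q ≠ 0)
    (p : Matrix (Fin n) (Fin n) ℂ) (hp : p ≠ 0)
    (hcase :
      (∀ α : Fin n, ∃ c d : ℂ, (c ≠ 0 ∨ d ≠ 0) ∧ ∀ j : Fin n, c * p j α + d * q j = 0) ∨
      (∃ β₀ : Fin n, (∀ β : Fin n, β ≠ β₀ → a β = 0) ∧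
        (∀ α : Fin n, α ≠ β₀ → ∀ j : Fin n, p j α = 0))) :
    ∀ z ∈ Matrix.unitaryGroup (Fin n) ℂ,
      (∑ j : Fin n, ∑ α : Fin n, p j α * z j α)
          * (∑ k : Fin n, ∑ β : Fin n, q k * a β * z k β)
        + kappaU n (fun w => ∑ j : Fin n, ∑ α : Fin n, p j α * w j α)
            (fun w => ∑ k : Fin n, ∑ β : Fin n, q k * a β * w k β) z = 0 := by
  intro z _
  rw [kappa_eval (fun j α => p j α) (fun k β => q k * a β) z]
  rcases hcase with h1 | ⟨β₀, hA, hP0⟩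
  · have hex : ∀ α : Fin n, ∃ l : ℂ, ∀ j, p j α = l * q j := by
      intro α
      obtain ⟨c, d, hcd, h⟩ := h1 α
      have hc : c ≠ 0 := by
        intro hc0
        have hd : d ≠ 0 := by
          rcases hcd with h' | h'
          · exact absurd hc0 h'
          · exact h'
        apply hq
        funext j
        have hj := h j
        rw [hc0] at hj
        simpa [hd] using hj
      refine ⟨-d / c, fun j => ?_⟩
      have hj := h j
      field_simp
      linear_combination hj
    choose lam hlam using hex
    simp only [hlam]
    have e1 : ∑ j : Fin n, ∑ α : Fin n, lam α * q j * z j α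
        = ∑ r : Fin n, lam r * ∑ j : Fin n, q j * z j r := by
      rw [Finset.sum_comm]
      exact Finset.sum_congr rfl fun r _ => by
        rw [Finset.mul_sum]
        exact Finset.sum_congr rfl fun j _ => by ring
    have e2 : ∑ k : Fin n, ∑ β : Fin n, q k * a β * z k β
        = ∑ s : Fin n, a s * ∑ k : Fin n, q k * z k s := by
      rw [Finset.sum_comm]
      exact Finset.sum_congr rfl fun s _ => by
        rw [Finset.mul_sum]
        exact Finset.sum_congr rfl fun k _ => by ring
    have e3 : ∀ r s : Fin n, ∑ j : Fin n, lam s * q j * z j r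
        = lam s * ∑ j : Fin n, q j * z j r := by
      intro r s
      rw [Finset.mul_sum]
      exact Finset.sum_congr rfl fun j _ => by ring
    have e4 : ∀ r s : Fin n, ∑ k : Fin n, q k * a r * z k s
        = a r * ∑ k : Fin n, q k * z k s := by
      intro r s
      rw [Finset.mul_sum]
      exact Finset.sum_congr rfl fun k _ => by ring
    rw [e1, e2]
    simp only [e3, e4]
    have e5 : ∑ r : Fin n, ∑ s : Fin n,
          (lam s * ∑ j : Fin n, q j * z j r) * (a r * ∑ k : Fin n, q k * z k s)
        = (∑ r : Fin n, a r * ∑ j : Fin n, q j * z j r)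
            * (∑ s : Fin n, lam s * ∑ k : Fin n, q k * z k s) := by
      rw [Finset.sum_mul_sum]
      exact Finset.sum_congr rfl fun r _ => Finset.sum_congr rfl fun s _ => by ring
    rw [e5]
    ring
  · have hP1 : ∀ j : Fin n, ∑ α : Fin n, p j α * z j α = p j β₀ * z j β₀ := fun j =>
      Finset.sum_eq_single β₀ (fun α _ hα => by rw [hP0 α hα j]; ring)
        (fun h => absurd (Finset.mem_univ _) h)
    have hQ1 : ∀ k : Fin n, ∑ β : Fin n, q k * a β * z k β = q k * a β₀ * z k β₀ := fun k =>
      Finset.sum_eq_single β₀ (fun β _ hβ => by rw [hA β hβ]; ring)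
        (fun h => absurd (Finset.mem_univ _) h)
    have hDS : ∑ r : Fin n, ∑ s : Fin n,
          (∑ j : Fin n, p j s * z j r) * (∑ k : Fin n, q k * a r * z k s)
        = (∑ j : Fin n, p j β₀ * z j β₀) * (∑ k : Fin n, q k * a β₀ * z k β₀) := by
      rw [Finset.sum_eq_single β₀
        (fun r _ hr => Finset.sum_eq_zero fun s _ => by rw [hA r hr]; simp)
        (fun h => absurd (Finset.mem_univ _) h)]
      rw [Finset.sum_eq_single β₀
        (fun s _ hs => by simp [hP0 s hs])
        (fun h => absurd (Finset.mem_univ _) h)]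
    simp only [hP1, hQ1]
    rw [hDS]
    ring
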